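/- Suppose the vectors C₀, C₁, …, C_k in W satisfy b(C₀,J₀) = 1, b(C₀,Jᵢ) = 0, b(Cᵢ,J₀) = 0 and b(Cᵢ,Jⱼ) = δᵢⱼ for all i,j ∈ {1,…,k}, let V > 0, and define g_t(x,y) = b(J(t),x)·b(J(t),y)/V − b(x,y). Then as t → ∞: (i) g_t(C₀,C₀) → ∞; (ii) the kinetic mixing ratio g_t(C₀,Cᵢ)/g_t(C₀,C₀) → 0 for each i; and (iii) g_t(Cᵢ,Cⱼ) → −b(Cᵢ,Cⱼ), i.e. the remaining kinetic couplings stay finite. Hence the 2-form B⁰ coupled to C⁰ is the unique asymptotically weakly coupled tensor field in this basis. -/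

import Mathlib

open Finset Filter

/-- In the limit `t → ∞` of the kinetic pairing
`g_t(x,y) = b(J(t),x)·b(J(t),y)/V − b(x,y)` with `J(t) = t·J₀ + Σᵢ (aᵢ/(2t))·Jᵢ`
and `{C₀, Cᵢ}` dual to `{J₀, Jᵢ}`: (i) `g_t(C₀,C₀) → ∞`;
(ii) the mixing ratios `g_t(C₀,Cᵢ)/g_t(C₀,C₀) → 0`; and
(iii) `g_t(Cᵢ,Cⱼ) → −b(Cᵢ,Cⱼ)` stays finite. Hence `B⁰` is the unique
asymptotically weakly coupled tensor in this basis. -/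
theorem unique_weakly_coupled_tensor
    (W : Type*) [AddCommGroup W] [Module ℝ W] [FiniteDimensional ℝ W]
    (b : W →ₗ[ℝ] W →ₗ[ℝ] ℝ) (hsymm : ∀ x y, b x y = b y x)
    (k : ℕ) (J₀ : W) (J : Fin k → W) (a : Fin k → ℝ) (V : ℝ) (hV : 0 < V)
    (C₀ : W) (C : Fin k → W)
    (h00 : b C₀ J₀ = 1) (h0i : ∀ i, b C₀ (J i) = 0)
    (hi0 : ∀ i, b (C i) J₀ = 0)
    (hij : ∀ i j, b (C i) (J j) = if i = j then (1:ℝ) else 0)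
    (Jt : ℝ → W) (hJt : ∀ t : ℝ, Jt t = t • J₀ + ∑ i, (a i / (2*t)) • J i)
    (g : ℝ → W → W → ℝ)
    (hg : ∀ t x y, g t x y = b (Jt t) x * b (Jt t) y / V - b x y) :
    Tendsto (fun t : ℝ => g t C₀ C₀) atTop atTop ∧
    (∀ i, Tendsto (fun t : ℝ => g t C₀ (C i) / g t C₀ C₀) atTop (nhds 0)) ∧
    (∀ i j, Tendsto (fun t : ℝ => g t (C i) (C j)) atTop
      (nhds (-(b (C i) (C j))))) := by

  have hb0 : ∀ t : ℝ, b (Jt t) C₀ = t := by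
    intro t
    rw [hsymm, hJt, map_add, map_smul, map_sum, h00]
    simp [h0i]
  have hbi : ∀ t : ℝ, ∀ i, b (Jt t) (C i) = a i / (2*t) := by
    intro t i
    rw [hsymm, hJt, map_add, map_smul, map_sum, hi0]
    simp [hij]
  have hg00 : ∀ t : ℝ, g t C₀ C₀ = t * t / V - b C₀ C₀ := by
    intro t; rw [hg, hb0]
  have h1 : Tendsto (fun t : ℝ => g t C₀ C₀) atTop atTop := by
    simp only [hg00]
    apply Tendsto.atTop_add _ tendsto_const_nhds
    apply Tendsto.atTop_div_const hV
    exact tendsto_id.atTop_mul_atTop₀ tendsto_id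
  refine ⟨h1, fun i => ?_, fun i j => ?_⟩
  · have hnum : ∀ᶠ t : ℝ in atTop, g t C₀ (C i) = a i / (2*V) - b C₀ (C i) := by
      filter_upwards [eventually_gt_atTop (0:ℝ)] with t ht
      rw [hg, hb0, hbi]
      field_simp
    have : Tendsto (fun t : ℝ => g t C₀ (C i)) atTop
        (nhds (a i / (2*V) - b C₀ (C i))) :=
      Tendsto.congr' (by filter_upwards [hnum] with t h using h.symm) tendsto_const_nhds
    exact Tendsto.div_atTop this h1
  · have hev : ∀ᶠ t : ℝ in atTop,
        (a i * a j / (4 * V)) * (1/t) * (1/t) - b (C i) (C j) = g t (C i) (C j) := by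
      filter_upwards [eventually_gt_atTop (0:ℝ)] with t ht
      rw [hg, hbi, hbi]
      field_simp
      ring
    have : Tendsto (fun t : ℝ => (a i * a j / (4 * V)) * (1/t) * (1/t) - b (C i) (C j))
        atTop (nhds (-(b (C i) (C j)))) := by
      have h0 : Tendsto (fun t : ℝ => (a i * a j / (4 * V)) * (1/t) * (1/t)) atTop (nhds 0) := by
        have := (tendsto_inv_atTop_zero.const_mul (a i * a j / (4 * V))).mul
          tendsto_inv_atTop_zero
        simpa [one_div, mul_assoc] using this
      simpa using h0.sub tendsto_const_nhds
    exact this.congr' hev
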